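/- Let x^s ∈ ℂ^n, x^s ≠ 0. Then the set of x ∈ ℂ^n satisfying (2‖x‖² − ‖x^s‖²)·x − ⟨x^s, x⟩·x^s = 0 is exactly the union of the three sets E1 = { e^{iθ} x^s : θ ∈ ℝ }, E2 = {0}, and E3 = { x ∈ ℂ^n : ⟨x^s, x⟩ = 0 and ‖x‖ = ‖x^s‖/√2 }. -/

import Mathlib

/-- the critical points of the expected Wirtinger objective, i.e.
the zeros of `x ↦ (2‖x‖² - ‖x^s‖²)x - ⟨x^s,x⟩x^s`, are exactly the global
phase orbit of `x^s`, the origin, and the circle of vectors orthogonal to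
`x^s` of norm `‖x^s‖/√2`. -/
theorem critical_points_expected_objective (n : ℕ)
    (xs : EuclideanSpace ℂ (Fin n)) (hxs : xs ≠ 0) :
    {x : EuclideanSpace ℂ (Fin n) |
        ((2 * ‖x‖ ^ 2 - ‖xs‖ ^ 2 : ℝ) : ℂ) • x - (inner ℂ xs x : ℂ) • xs = 0}
      = {x : EuclideanSpace ℂ (Fin n) | ∃ θ : ℝ, x = Complex.exp (θ * Complex.I) • xs}
        ∪ {0}
        ∪ {x : EuclideanSpace ℂ (Fin n) |
            (inner ℂ xs x : ℂ) = 0 ∧ ‖x‖ = ‖xs‖ / Real.sqrt 2} := by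
  have hns : ‖xs‖ ≠ 0 := norm_ne_zero_iff.mpr hxs
  have hinner_self : (inner ℂ xs xs : ℂ) = ((‖xs‖ : ℂ)) ^ 2 := inner_self_eq_norm_sq_to_K xs
  ext x
  simp only [Set.mem_setOf_eq, Set.mem_union, Set.mem_singleton_iff]
  constructor
  · intro h
    rw [sub_eq_zero] at h
    by_cases hc : (inner ℂ xs x : ℂ) = 0
    · by_cases hx : x = 0
      · exact Or.inl (Or.inr hx)
      · refine Or.inr ⟨hc, ?_⟩
        rw [hc, zero_smul] at h
        rcases smul_eq_zero.mp h with h0 | h0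
        · have h1 : (2 * ‖x‖ ^ 2 - ‖xs‖ ^ 2 : ℝ) = 0 := by exact_mod_cast h0
          have h2 : ‖x‖ ^ 2 = (‖xs‖ / Real.sqrt 2) ^ 2 := by
            rw [div_pow, Real.sq_sqrt (by norm_num : (0:ℝ) ≤ 2)]
            linarith
          exact sq_eq_sq₀ (norm_nonneg _) (by positivity) |>.mp h2
        · exact absurd h0 hx
    · set lam : ℂ := ((2 * ‖x‖ ^ 2 - ‖xs‖ ^ 2 : ℝ) : ℂ) with hlam
      have hl : lam ≠ 0 := by
        intro h0
        rw [h0, zero_smul] at h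
        rcases (smul_eq_zero.mp h.symm) with h1 | h1
        · exact hc h1
        · exact hxs h1
      set t : ℂ := (inner ℂ xs x : ℂ) / lam with ht
      have ht0 : t ≠ 0 := div_ne_zero hc hl
      have hx : x = t • xs := by
        rw [ht, div_eq_mul_inv, mul_comm, ← smul_smul, ← h, smul_smul,
          inv_mul_cancel₀ hl, one_smul]
      -- rewrite the equation using x = t • xs
      rw [hx, inner_smul_right, hinner_self, smul_smul] at h
      -- derive lam = ‖xs‖^2
      have hkey : lam * t = t * (‖xs‖:ℂ)^2 := by
        have h' : (lam * t - t * (‖xs‖:ℂ)^2) • xs = 0 := by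
          rw [sub_smul, sub_eq_zero]; exact h
        rcases smul_eq_zero.mp h' with h1 | h1
        · linear_combination h1
        · exact absurd h1 hxs
      have hlameq : lam = ((‖xs‖:ℂ))^2 :=
        mul_left_cancel₀ ht0 (by linear_combination hkey)
      have hreal : (2 * ‖x‖ ^ 2 - ‖xs‖ ^ 2 : ℝ) = ‖xs‖ ^ 2 := by
        have := hlameq
        rw [hlam] at this
        exact_mod_cast this
      have hnx : ‖x‖ = ‖xs‖ := by
        have h2 : ‖x‖ ^ 2 = ‖xs‖ ^ 2 := by linarith
        exact sq_eq_sq₀ (norm_nonneg _) (norm_nonneg _) |>.mp h2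
      have habs : ‖t‖ = 1 := by
        have := hnx
        rw [hx, norm_smul] at this
        have : ‖t‖ * ‖xs‖ = 1 * ‖xs‖ := by simpa using this
        exact mul_right_cancel₀ hns this
      refine Or.inl (Or.inl ⟨t.arg, ?_⟩)
      have : Complex.exp (t.arg * Complex.I) = t := by
        conv_rhs => rw [← Complex.norm_mul_exp_arg_mul_I t]
        rw [habs]; simp
      rw [this]; exact hx
  · rintro ((⟨θ, rfl⟩ | rfl) | ⟨hortho, hnorm⟩)
    · have he : ‖Complex.exp (θ * Complex.I)‖ = 1 := by
        simp [Complex.norm_exp]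
      rw [norm_smul, he, one_mul, inner_smul_right, hinner_self, smul_smul]
      rw [sub_eq_zero]
      congr 1
      push_cast
      ring
    · simp
    · rw [hortho, zero_smul, sub_zero]
      have h2 : (2 * ‖x‖ ^ 2 - ‖xs‖ ^ 2 : ℝ) = 0 := by
        rw [hnorm, div_pow, Real.sq_sqrt (by norm_num : (0:ℝ) ≤ 2)]
        ring
      rw [h2]
      simp
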